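/- With the same hypotheses, for x ∈ A[N₀] and m ∈ M and t ∈ L₊ one has ψₜ(x·m) = ∑_{u ∈ J(N₀/tN₀t⁻¹)} ψₜ(x·u) · ψₜ(u⁻¹·m), where J(N₀/tN₀t⁻¹) is any set of representatives of the cosets N₀/tN₀t⁻¹. -/

import Mathlib

open scoped Classical

/-!
STATEMENT 6: In the same étale setting, for `x ∈ A[N₀]`, `m ∈ M` and `t ∈ L₊`,
`ψₜ(x·m) = ∑_{u ∈ J(N₀/tN₀t⁻¹)} ψₜ(x·u) · ψₜ(u⁻¹·m)`, where `J(N₀/tN₀t⁻¹)` is any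
set of representatives of the cosets `N₀/tN₀t⁻¹`, `ψₜ` is the canonical left inverse
of `φₜ` on `M`, and `ψₜ` on `A[N₀]` is the canonical left inverse of `φₜ` on the
étale `A[P₊]`-module `A[N₀]`.
-/

variable {P : Type*} [Group P]

/-- The subgroup `N₀ ∩ tN₀t⁻¹` of `N₀`, i.e. those `u ∈ N₀` with `t⁻¹ u t ∈ N₀`. -/
def conjSub (N₀ : Subgroup P) (t : P) : Subgroup ↥N₀ where
  carrier := {u | t⁻¹ * (u : P) * t ∈ N₀}
  one_mem' := by simpa using N₀.one_mem
  mul_mem' := by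
    intro a b ha hb
    show t⁻¹ * ((a * b : ↥N₀) : P) * t ∈ N₀
    have h : t⁻¹ * ((a * b : ↥N₀) : P) * t = (t⁻¹ * (a : P) * t) * (t⁻¹ * (b : P) * t) := by
      push_cast; group
    rw [h]
    exact N₀.mul_mem ha hb
  inv_mem' := by
    intro a ha
    show t⁻¹ * ((a⁻¹ : ↥N₀) : P) * t ∈ N₀
    have h : t⁻¹ * ((a⁻¹ : ↥N₀) : P) * t = (t⁻¹ * (a : P) * t)⁻¹ := by
      push_cast; group
    rw [h]
    exact N₀.inv_mem ha

/-- An `A[P₊]`-module `M` (with `N₀`-action `ρ`) is *étale* at `t` (acting by `φ`)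
if `φ` is injective and `M = ⨁_{u ∈ J(N₀/tN₀t⁻¹)} u·φ(M)`. -/
def IsEtaleAt (A : Type*) [CommRing A] (N₀ : Subgroup P) (t : P)
    {M : Type*} [AddCommGroup M] [Module A M]
    (ρ : ↥N₀ → Module.End A M) (φ : Module.End A M) : Prop :=
  Function.Injective φ ∧
    DirectSum.IsInternal fun c : ↥N₀ ⧸ conjSub N₀ t =>
      LinearMap.range (ρ (Quotient.out c) * φ)

/-- The canonical left inverse `ψₜ` of `φₜ` acting on the group algebra `A[N₀]`:
`ψₜ(single u a) = single (t⁻¹ut) a` if `u ∈ tN₀t⁻¹`, and `0` otherwise. -/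
noncomputable def psiA (A : Type*) [CommRing A] (N₀ : Subgroup P) (t : P) :
    MonoidAlgebra A ↥N₀ →ₗ[A] MonoidAlgebra A ↥N₀ :=
  (MonoidAlgebra.coeffLinearEquiv A).symm.toLinearMap ∘ₗ (Finsupp.lsum A fun u : ↥N₀ =>
    if h : t⁻¹ * (u : P) * t ∈ N₀ then Finsupp.lsingle (⟨t⁻¹ * u * t, h⟩ : ↥N₀) else 0) ∘ₗ
    (MonoidAlgebra.coeffLinearEquiv A).toLinearMap

/-- **(Lemma 3.6 of the paper.)**  `ψₜ(x·m) = ∑_u ψₜ(x·u)·ψₜ(u⁻¹·m)`, the sum being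
over any set of representatives `u = rep c` of the cosets `c ∈ N₀/tN₀t⁻¹`. -/
theorem psi_product_formula (A : Type*) [CommRing A] (N₀ : Subgroup P) (t : P)
    (hstab : ∀ u : P, u ∈ N₀ → t * u * t⁻¹ ∈ N₀)
    {M : Type*} [AddCommGroup M] [Module A M]
    (ρ : ↥N₀ →* Module.End A M) (φ ψ : Module.End A M)
    (hcompat : ∀ (u : ↥N₀) (m : M), φ (ρ u m) = ρ ⟨t * u * t⁻¹, hstab u u.2⟩ (φ m))
    (hetale : IsEtaleAt A N₀ t (fun u => ρ u) φ)
    (hψφ : ψ * φ = 1)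
    (hvanish : ∀ u : ↥N₀, u ∉ conjSub N₀ t → ∀ m : M, ψ (ρ u (φ m)) = 0)
    [Fintype (↥N₀ ⧸ conjSub N₀ t)]
    (rep : ↥N₀ ⧸ conjSub N₀ t → ↥N₀)
    (hrep : ∀ c, QuotientGroup.mk (rep c) = c)
    (x : MonoidAlgebra A ↥N₀) (m : M) :
    ψ ((MonoidAlgebra.lift A (Module.End A M) ↥N₀ ρ) x m)
      = ∑ c : ↥N₀ ⧸ conjSub N₀ t,
          (MonoidAlgebra.lift A (Module.End A M) ↥N₀ ρ)
            (psiA A N₀ t (x * MonoidAlgebra.single (rep c) (1 : A)))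
            (ψ (ρ (rep c)⁻¹ m)) := by
  classical
  have hψφ' : ∀ z : M, ψ (φ z) = z := by
    intro z
    have := congrArg (fun f : Module.End A M => f z) hψφ
    simpa [Module.End.mul_apply] using this
  -- key dichotomy
  have key : ∀ (w : ↥N₀) (m0 : M), ψ (ρ w (φ m0)) =
      if h : w ∈ conjSub N₀ t then ρ ⟨t⁻¹ * (w : P) * t, h⟩ m0 else 0 := by
    intro w m0
    by_cases h : w ∈ conjSub N₀ t
    · rw [dif_pos h]
      have hc : φ (ρ (⟨t⁻¹ * (w : P) * t, h⟩ : ↥N₀) m0) = ρ w (φ m0) := by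
        rw [hcompat]
        exact congrArg (fun z : ↥N₀ => ρ z (φ m0))
          (Subtype.ext (show t * (t⁻¹ * (w : P) * t) * t⁻¹ = (w : P) by group))
      rw [← hc, hψφ']
    · rw [dif_neg h]
      exact hvanish w h m0
  have psiA_single : ∀ (u : ↥N₀) (a : A), psiA A N₀ t (MonoidAlgebra.single u a) =
      if h : t⁻¹ * (u : P) * t ∈ N₀
        then MonoidAlgebra.single (⟨t⁻¹ * (u : P) * t, h⟩ : ↥N₀) a else 0 := by
    intro u a
    unfold psiA
    rw [LinearMap.comp_apply, LinearMap.comp_apply]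
    simp only [LinearEquiv.coe_coe, MonoidAlgebra.coeffLinearEquiv_apply,
      MonoidAlgebra.coeff_single, MonoidAlgebra.coeffLinearEquiv_symm_apply]
    rw [Finsupp.lsum_single]
    split_ifs with h
    · rfl
    · rfl
  have htop : (⨆ c : ↥N₀ ⧸ conjSub N₀ t, LinearMap.range (ρ (Quotient.out c) * φ)) = ⊤ :=
    hetale.2.submodule_iSup_eq_top
  have hm : m ∈ (⨆ c : ↥N₀ ⧸ conjSub N₀ t, LinearMap.range (ρ (Quotient.out c) * φ)) := by
    rw [htop]; trivial
  revert x
  refine Submodule.iSup_induction (motive := fun m => ∀ x : MonoidAlgebra A ↥N₀,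
      ψ ((MonoidAlgebra.lift A (Module.End A M) ↥N₀ ρ) x m)
        = ∑ c : ↥N₀ ⧸ conjSub N₀ t,
            (MonoidAlgebra.lift A (Module.End A M) ↥N₀ ρ)
              (psiA A N₀ t (x * MonoidAlgebra.single (rep c) (1 : A)))
              (ψ (ρ (rep c)⁻¹ m))) _ hm ?_ ?_ ?_
  · -- generators
    rintro c0 m ⟨m0, rfl⟩ x
    induction x using MonoidAlgebra.induction_linear with
    | zero => simp
    | add f g hf hg =>
      simp only [add_mul, map_add, LinearMap.add_apply]
      rw [hf, hg, ← Finset.sum_add_distrib]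
    | single v a =>
      rw [Finset.sum_eq_single c0]
      · -- main term
        have h0 : (rep c0)⁻¹ * Quotient.out c0 ∈ conjSub N₀ t := by
          rw [← QuotientGroup.eq, hrep c0, QuotientGroup.out_eq']
        rw [MonoidAlgebra.single_mul_single, mul_one, psiA_single]
        have hrho : ∀ y : M, ρ (rep c0)⁻¹ ((ρ (Quotient.out c0) * φ) y)
            = ρ ((rep c0)⁻¹ * Quotient.out c0) (φ y) := by
          intro y
          rw [map_mul, Module.End.mul_apply]; rfl
        rw [hrho, key _ m0, dif_pos h0]
        by_cases hv : t⁻¹ * ((v * rep c0 : ↥N₀) : P) * t ∈ N₀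
        · have hv' : (v * rep c0 : ↥N₀) ∈ conjSub N₀ t := hv
          have hvo : (v * Quotient.out c0 : ↥N₀) ∈ conjSub N₀ t := by
            have he : (v * Quotient.out c0 : ↥N₀)
                = (v * rep c0) * ((rep c0)⁻¹ * Quotient.out c0) := by group
            rw [he]
            exact (conjSub N₀ t).mul_mem hv' h0
          have hL : ψ ((MonoidAlgebra.lift A (Module.End A M) ↥N₀ ρ)
              (MonoidAlgebra.single v a) ((ρ (Quotient.out c0) * φ) m0))
              = a • ρ (⟨t⁻¹ * ((v * Quotient.out c0 : ↥N₀) : P) * t, hvo⟩ : ↥N₀) m0 := by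
            rw [MonoidAlgebra.lift_single, LinearMap.smul_apply, Module.End.mul_apply,
              map_smul]
            congr 1
            have hrho2 : ρ v (ρ (Quotient.out c0) (φ m0))
                = ρ (v * Quotient.out c0) (φ m0) := by rw [map_mul]; rfl
            rw [hrho2, key _ m0, dif_pos hvo]
          rw [hL, dif_pos hv, MonoidAlgebra.lift_single, LinearMap.smul_apply]
          congr 1
          have hmul : ρ (⟨t⁻¹ * ((v * rep c0 : ↥N₀) : P) * t, hv⟩ : ↥N₀)
              (ρ (⟨t⁻¹ * (((rep c0)⁻¹ * Quotient.out c0 : ↥N₀) : P) * t, h0⟩ : ↥N₀) m0)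
              = ρ ((⟨t⁻¹ * ((v * rep c0 : ↥N₀) : P) * t, hv⟩ : ↥N₀)
                * ⟨t⁻¹ * (((rep c0)⁻¹ * Quotient.out c0 : ↥N₀) : P) * t, h0⟩) m0 := by
            rw [map_mul]; rfl
          rw [hmul]
          refine congrArg (fun z : ↥N₀ => ρ z m0) (Subtype.ext ?_).symm
          show (t⁻¹ * ((v * rep c0 : ↥N₀) : P) * t)
              * (t⁻¹ * (((rep c0)⁻¹ * Quotient.out c0 : ↥N₀) : P) * t)
            = t⁻¹ * ((v * Quotient.out c0 : ↥N₀) : P) * t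
          push_cast
          group
        · have hvo : (v * Quotient.out c0 : ↥N₀) ∉ conjSub N₀ t := by
            intro hmem
            apply hv
            have he : (v * rep c0 : ↥N₀)
                = (v * Quotient.out c0) * ((rep c0)⁻¹ * Quotient.out c0)⁻¹ := by group
            have hmem' : (v * rep c0 : ↥N₀) ∈ conjSub N₀ t := by
              rw [he]
              exact (conjSub N₀ t).mul_mem hmem ((conjSub N₀ t).inv_mem h0)
            exact hmem'
          have hrho2 : ρ v (ρ (Quotient.out c0) (φ m0))
              = ρ (v * Quotient.out c0) (φ m0) := by rw [map_mul]; rfl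
          rw [dif_neg hv, MonoidAlgebra.lift_single, LinearMap.smul_apply,
            Module.End.mul_apply, map_smul, hrho2, key _ m0, dif_neg hvo]
          simp
      · -- other terms vanish
        intro c _ hc
        have hnot : (rep c)⁻¹ * Quotient.out c0 ∉ conjSub N₀ t := by
          intro hmem
          apply hc
          have heq : (QuotientGroup.mk (rep c) : ↥N₀ ⧸ conjSub N₀ t)
              = QuotientGroup.mk (Quotient.out c0) := QuotientGroup.eq.mpr hmem
          rw [hrep c, QuotientGroup.out_eq'] at heq
          exact heq
        have hrho : ρ (rep c)⁻¹ ((ρ (Quotient.out c0) * φ) m0)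
            = ρ ((rep c)⁻¹ * Quotient.out c0) (φ m0) := by
          rw [map_mul, Module.End.mul_apply]; rfl
        rw [hrho, key _ m0, dif_neg hnot]
        simp
      · intro h
        exact absurd (Finset.mem_univ c0) h
  · intro x; simp
  · intro m1 m2 h1 h2 x
    simp [map_add, h1 x, h2 x, Finset.sum_add_distrib]
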